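/- Let G be a d-regular graph on n vertices. Then the number of subtrees of G with exactly k vertices is at most n · k^(k−2) · d^(k−1) / k!. -/

import Mathlib

open MeasureTheory Filter Real

section Defs

variable {V : Type*}

def SimpleGraph.percGraph (G : SimpleGraph V) [DecidableRel G.Adj]
    (ω : Sym2 V → Bool) : SimpleGraph V where
  Adj u v := G.Adj u v ∧ ω s(u, v) = true
  symm := ⟨fun u v h => ⟨h.1.symm, by rw [Sym2.eq_swap]; exact h.2⟩⟩
  loopless := ⟨fun v h => G.loopless.irrefl v h.1⟩

instance {G : SimpleGraph V} [DecidableRel G.Adj] {ω : Sym2 V → Bool} :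
    DecidableRel (G.percGraph ω).Adj := fun u v =>
  inferInstanceAs (Decidable (G.Adj u v ∧ ω s(u, v) = true))

noncomputable def percMeasure (V : Type*) [Fintype V] [DecidableEq V] (p : ℝ) :
    Measure (Sym2 V → Bool) :=
  Measure.pi fun _ => (PMF.bernoulli (min (Real.toNNReal p) 1) (min_le_right _ _)).toMeasure

def IsNDLGraph [Fintype V] (G : SimpleGraph V) [DecidableRel G.Adj] (d : ℕ) (lam : ℝ) : Prop :=
  G.IsRegularOfDegree d ∧
  ∀ f : V → ℝ, (∑ v, f v = 0) →
    ∑ v, ((G.adjMatrix ℝ).mulVec f v) ^ 2 ≤ lam ^ 2 * ∑ v, (f v) ^ 2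

def epairs [Fintype V] (H : SimpleGraph V) [DecidableRel H.Adj] (A B : Finset V) : ℕ :=
  ∑ a ∈ A, ∑ b ∈ B, if H.Adj a b then 1 else 0

def extNbhd [Fintype V] [DecidableEq V] (H : SimpleGraph V) [DecidableRel H.Adj]
    (S : Finset V) : Finset V :=
  Finset.univ.filter fun v => v ∉ S ∧ ∃ u ∈ S, H.Adj u v

def IsLargestComponent (H : SimpleGraph V) (K : Set V) : Prop :=
  (∃ C : H.ConnectedComponent, K = C.supp) ∧
  ∀ C' : H.ConnectedComponent, C'.supp.ncard ≤ K.ncard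

noncomputable def gball [Fintype V] (H : SimpleGraph V) (v : V) (r : ℕ) : Finset V :=
  Finset.univ.filter fun u => H.dist v u ≤ r

end Defs


open Finset

namespace PruferAux
variable {k : ℕ}

noncomputable def pdeg (t : Finset (Sym2 (Fin k))) (i : Fin k) : ℕ :=
  (t.filter fun e => i ∈ e).card

def Wf (s : Finset (Fin k)) (t : Finset (Sym2 (Fin k))) : Prop :=
  ∀ e ∈ t, ¬ e.IsDiag ∧ ∀ i ∈ e, i ∈ s

def Reach (t : Finset (Sym2 (Fin k))) : Fin k → Fin k → Prop :=
  Relation.ReflTransGen fun a b => s(a, b) ∈ t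

def Conn (s : Finset (Fin k)) (t : Finset (Sym2 (Fin k))) : Prop :=
  ∀ i ∈ s, ∀ j ∈ s, Reach t i j

def Inv (s : Finset (Fin k)) (t : Finset (Sym2 (Fin k))) : Prop :=
  Wf s t ∧ Conn s t ∧ t.card + 1 = s.card

inductive Steps : Finset (Fin k) → Finset (Sym2 (Fin k)) → List (Fin k × Fin k) → Prop
  | base (i : Fin k) : Steps {i} ∅ []
  | step {s : Finset (Fin k)} {t : Finset (Sym2 (Fin k))} {L : List (Fin k × Fin k)}
      (ℓ n : Fin k) (hl : ℓ ∈ s) (he : s(ℓ, n) ∈ t) (hdeg : pdeg t ℓ = 1)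
      (hmin : ∀ i ∈ s, pdeg t i = 1 → ℓ ≤ i)
      (hrec : Steps (s.erase ℓ) (t.erase s(ℓ, n)) L) :
      Steps s t ((ℓ, n) :: L)

variable {s : Finset (Fin k)} {t : Finset (Sym2 (Fin k))}

lemma Wf.nondiag (hw : Wf s t) {a b : Fin k} (h : s(a,b) ∈ t) : a ≠ b := by
  intro hab; exact (hw _ h).1 (by simp [hab])

lemma Wf.mem_left (hw : Wf s t) {a b : Fin k} (h : s(a,b) ∈ t) : a ∈ s :=
  (hw _ h).2 a (by simp)

lemma Wf.mem_right (hw : Wf s t) {a b : Fin k} (h : s(a,b) ∈ t) : b ∈ s :=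
  (hw _ h).2 b (by simp)

lemma edge_unique {ℓ : Fin k} (hdeg : pdeg t ℓ = 1)
    {e₁ e₂ : Sym2 (Fin k)} (h₁ : e₁ ∈ t) (h₂ : e₂ ∈ t) (m₁ : ℓ ∈ e₁) (m₂ : ℓ ∈ e₂) :
    e₁ = e₂ :=
  Finset.card_le_one.1 (le_of_eq hdeg) _ (mem_filter.2 ⟨h₁, m₁⟩) _ (mem_filter.2 ⟨h₂, m₂⟩)

lemma pdeg_erase {e : Sym2 (Fin k)} (he : e ∈ t) (i : Fin k) :
    pdeg t i = pdeg (t.erase e) i + (if i ∈ e then 1 else 0) := by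
  unfold pdeg
  rw [Finset.filter_erase]
  by_cases h : i ∈ e
  · rw [if_pos h, Finset.card_erase_of_mem (Finset.mem_filter.2 ⟨he, h⟩)]
    have : 0 < (t.filter fun e => i ∈ e).card :=
      Finset.card_pos.2 ⟨e, Finset.mem_filter.2 ⟨he, h⟩⟩
    omega
  · rw [if_neg h,
      Finset.erase_eq_of_notMem (a := e) (fun hc => h (Finset.mem_filter.1 hc).2)]
    omega

lemma reach_erase (hw : Wf s t) {ℓ n : Fin k} (he : s(ℓ,n) ∈ t)
    (huniq : ∀ e ∈ t, ℓ ∈ e → e = s(ℓ, n)) {x y : Fin k} (hx : x ≠ ℓ)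
    (hr : Reach t x y) :
    (y = ℓ → Reach (t.erase s(ℓ,n)) x n) ∧ (y ≠ ℓ → Reach (t.erase s(ℓ,n)) x y) := by
  have hln : ℓ ≠ n := hw.nondiag he
  induction hr with
  | refl => exact ⟨fun h => absurd h hx, fun _ => Relation.ReflTransGen.refl⟩
  | @tail c y hxc hcy ih =>
    rcases eq_or_ne c ℓ with rfl | hc
    · have : s(c, y) = s(c, n) := huniq _ hcy (by simp)
      have hyn : y = n := by
        have := Sym2.eq_iff.1 this
        tauto
      subst hyn
      exact ⟨fun h => absurd h (Ne.symm hln), fun _ => ih.1 rfl⟩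
    · rcases eq_or_ne y ℓ with rfl | hy
      · have : s(c, y) = s(y, n) := huniq _ hcy (by simp)
        have hcn : c = n := by
          have := Sym2.eq_iff.1 this
          tauto
        subst hcn
        exact ⟨fun _ => ih.2 hc, fun h => absurd rfl h⟩
      · refine ⟨fun h => absurd h hy, fun _ => (ih.2 hc).tail ?_⟩
        refine Finset.mem_erase.2 ⟨?_, hcy⟩
        intro hcontra
        have : ℓ ∈ s(c, y) := hcontra ▸ (by simp : ℓ ∈ s(ℓ, n))
        simp only [Sym2.mem_iff] at this
        rcases this with h | h
        · exact hc h.symm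
        · exact hy h.symm

lemma sum_pdeg (hw : Wf s t) : ∑ i ∈ s, pdeg t i = 2 * t.card := by
  unfold pdeg
  have h1 : ∀ i ∈ s, (t.filter fun e => i ∈ e).card = ∑ e ∈ t, (if i ∈ e then 1 else 0) :=
    fun i _ => Finset.card_filter _ _
  rw [Finset.sum_congr rfl h1, Finset.sum_comm]
  have h2 : ∀ e ∈ t, (∑ i ∈ s, if i ∈ e then 1 else 0) = 2 := by
    intro e het
    induction e using Sym2.inductionOn with
    | hf a b =>
      have hab : a ≠ b := hw.nondiag het
      have ha : a ∈ s := hw.mem_left het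
      have hb : b ∈ s := hw.mem_right het
      rw [← Finset.card_filter]
      have : s.filter (fun i => i ∈ s(a, b)) = {a, b} := by
        ext i
        simp only [Finset.mem_filter, Sym2.mem_iff, Finset.mem_insert, Finset.mem_singleton]
        constructor
        · rintro ⟨-, h⟩; exact h
        · rintro (rfl | rfl) <;> simp [ha, hb]
      rw [this, Finset.card_pair hab]
  rw [Finset.sum_congr rfl h2, Finset.sum_const, smul_eq_mul, mul_comm]

lemma min_pdeg (hI : Inv s t) (hcard : 2 ≤ s.card) :
    ∀ i ∈ s, 1 ≤ pdeg t i := by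
  intro i hi
  obtain ⟨j, hj, hji⟩ := Finset.exists_mem_ne (s := s) (by omega) i
  have hr : Reach t i j := hI.2.1 i hi j hj
  rcases Relation.ReflTransGen.cases_head hr with h | ⟨c, hic, -⟩
  · exact absurd h.symm hji
  · exact Finset.card_pos.2 ⟨s(i,c), Finset.mem_filter.2 ⟨hic, by simp⟩⟩

lemma leaf_ne_max (hI : Inv s t) (hcard : 2 ≤ s.card) {ℓ : Fin k}
    (hl : ℓ ∈ s) (hdeg : pdeg t ℓ = 1) (hmin : ∀ i ∈ s, pdeg t i = 1 → ℓ ≤ i)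
    (hne : s.Nonempty) : ℓ ≠ s.max' hne := by
  have hexists : ∃ j ∈ s, j ≠ ℓ ∧ pdeg t j = 1 := by
    by_contra hcon
    push_neg at hcon
    have hsum : ∑ i ∈ s, pdeg t i = 2 * t.card := sum_pdeg hI.1
    have hbound : ∀ i ∈ s, i ≠ ℓ → 2 ≤ pdeg t i := by
      intro i hi hne'
      have h1 := min_pdeg hI hcard i hi
      have h2 := hcon i hi hne'
      omega
    have hsplit : ∑ i ∈ s, pdeg t i = pdeg t ℓ + ∑ i ∈ s.erase ℓ, pdeg t i :=
      (Finset.add_sum_erase _ _ hl).symm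
    have h3 : 2 * (s.card - 1) ≤ ∑ i ∈ s.erase ℓ, pdeg t i := by
      calc 2 * (s.card - 1) = ∑ _i ∈ s.erase ℓ, 2 := by
            rw [Finset.sum_const, Finset.card_erase_of_mem hl, smul_eq_mul, mul_comm]
        _ ≤ ∑ i ∈ s.erase ℓ, pdeg t i :=
            Finset.sum_le_sum (fun i hi =>
              hbound i (Finset.mem_of_mem_erase hi) (Finset.ne_of_mem_erase hi))
    have ht : t.card + 1 = s.card := hI.2.2
    omega
  obtain ⟨j, hj, hjl, hdj⟩ := hexists
  intro hcontra
  have h1 : ℓ ≤ j := hmin j hj hdj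
  have h2 : j ≤ s.max' hne := Finset.le_max' s j hj
  rw [← hcontra] at h2
  exact hjl (le_antisymm h2 h1)

lemma exists_leaf (hI : Inv s t) (hcard : 2 ≤ s.card) :
    ∃ ℓ ∈ s, pdeg t ℓ = 1 := by
  by_contra hcon
  push_neg at hcon
  have hbound : ∀ i ∈ s, 2 ≤ pdeg t i := by
    intro i hi
    have h1 := min_pdeg hI hcard i hi
    have h2 := hcon i hi
    omega
  have hsum : ∑ i ∈ s, pdeg t i = 2 * t.card := sum_pdeg hI.1
  have h3 : 2 * s.card ≤ ∑ i ∈ s, pdeg t i := by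
    calc 2 * s.card = ∑ _i ∈ s, 2 := by rw [Finset.sum_const, smul_eq_mul, mul_comm]
      _ ≤ ∑ i ∈ s, pdeg t i := Finset.sum_le_sum hbound
  have ht : t.card + 1 = s.card := hI.2.2
  omega

lemma Inv.step (hI : Inv s t) {ℓ n : Fin k} (hl : ℓ ∈ s) (he : s(ℓ,n) ∈ t)
    (hdeg : pdeg t ℓ = 1) : Inv (s.erase ℓ) (t.erase s(ℓ,n)) := by
  obtain ⟨hw, hc, hcard⟩ := hI
  have huniq : ∀ e ∈ t, ℓ ∈ e → e = s(ℓ, n) := fun e het hle =>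
    edge_unique hdeg het he hle (by simp)
  refine ⟨?_, ?_, ?_⟩
  · intro e hee
    have het := Finset.mem_of_mem_erase hee
    refine ⟨(hw e het).1, fun i hie => Finset.mem_erase.2 ⟨?_, (hw e het).2 i hie⟩⟩
    intro hcontra
    subst hcontra
    exact (Finset.mem_erase.1 hee).1 (huniq e het hie)
  · intro x hx y hy
    have hx' := Finset.mem_erase.1 hx
    have hy' := Finset.mem_erase.1 hy
    exact (reach_erase hw he huniq hx'.1 (hc x hx'.2 y hy'.2)).2 hy'.1
  · rw [Finset.card_erase_of_mem he, Finset.card_erase_of_mem hl]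
    have : 0 < t.card := Finset.card_pos.2 ⟨_, he⟩
    omega



lemma max'_erase {ℓ : Fin k} (hl : ℓ ∈ s) (hne' : (s.erase ℓ).Nonempty)
    (hne : s.Nonempty) (hℓ : ℓ ≠ s.max' hne) : (s.erase ℓ).max' hne' = s.max' hne := by
  apply le_antisymm
  · exact Finset.max'_le _ _ _ (fun y hy => Finset.le_max' s y (Finset.mem_of_mem_erase hy))
  · exact Finset.le_max' _ _ (Finset.mem_erase.2 ⟨(Ne.symm hℓ), Finset.max'_mem s hne⟩)

lemma Steps.len {L : List (Fin k × Fin k)} (h : Steps s t L) : L.length + 1 = s.card := by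
  induction h with
  | base i => simp
  | @step s t L ℓ n hl he hdeg hmin hrec ih =>
    simp only [List.length_cons]
    rw [Finset.card_erase_of_mem hl] at ih
    have : 0 < s.card := Finset.card_pos.2 ⟨ℓ, hl⟩
    omega

lemma Steps.mem_s {L : List (Fin k × Fin k)} (h : Steps s t L) :
    Inv s t → ∀ p ∈ L, p.1 ∈ s ∧ p.2 ∈ s := by
  induction h with
  | base i => intro _ p hp; simp at hp
  | @step s t L ℓ n hl he hdeg hmin hrec ih =>
    intro hI p hp
    rcases List.mem_cons.1 hp with rfl | hp'
    · exact ⟨hl, hI.1.mem_right he⟩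
    · have := ih (hI.step hl he hdeg) p hp'
      exact ⟨Finset.mem_of_mem_erase this.1, Finset.mem_of_mem_erase this.2⟩

lemma Steps.nodup_fst {L : List (Fin k × Fin k)} (h : Steps s t L) :
    Inv s t → (L.map Prod.fst).Nodup := by
  induction h with
  | base i => intro _; simp
  | @step s t L ℓ n hl he hdeg hmin hrec ih =>
    intro hI
    have hI' := hI.step hl he hdeg
    simp only [List.map_cons, List.nodup_cons]
    refine ⟨?_, ih hI'⟩
    intro hmem
    obtain ⟨p, hp, hpe⟩ := List.mem_map.1 hmem
    have := (hrec.mem_s hI' p hp).1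
    rw [hpe] at this
    exact (Finset.mem_erase.1 this).1 rfl

lemma Steps.pdeg_eq {L : List (Fin k × Fin k)} (h : Steps s t L) :
    Inv s t → ∀ i ∈ s,
      pdeg t i = (L.map Prod.snd).count i + (if i ∈ L.map Prod.fst then 1 else 0) := by
  induction h with
  | base j => intro _ i hi; simp [pdeg]
  | @step s t L ℓ n hl he hdeg hmin hrec ih =>
    intro hI i hi
    have hI' := hI.step hl he hdeg
    have hln : ℓ ≠ n := hI.1.nondiag he
    rcases eq_or_ne i ℓ with rfl | hil
    · have hnotmem : i ∉ L.map Prod.snd := by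
        intro hmem
        obtain ⟨p, hp, hpe⟩ := List.mem_map.1 hmem
        have := (hrec.mem_s hI' p hp).2
        rw [hpe] at this
        exact (Finset.mem_erase.1 this).1 rfl
      simp only [List.map_cons, List.count_cons, List.mem_cons]
      rw [List.count_eq_zero.2 hnotmem]
      simp [hdeg, Ne.symm hln]
    · have hie : i ∈ s.erase ℓ := Finset.mem_erase.2 ⟨hil, hi⟩
      have hrecon := ih hI' i hie
      have hPE := pdeg_erase he i
      have h1 : ((i ∈ s(ℓ, n)) ↔ i = n) := by
        simp [Sym2.mem_iff, hil]
      rw [hrecon] at hPE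
      have h2 : ((if i ∈ s(ℓ, n) then 1 else 0 : ℕ)) = if n = i then 1 else 0 := by
        by_cases hin : i = n
        · rw [if_pos (h1.2 hin), if_pos hin.symm]
        · rw [if_neg (fun hc => hin (h1.1 hc)), if_neg (fun hc => hin hc.symm)]
      have h3 : ((if i = ℓ ∨ i ∈ L.map Prod.fst then 1 else 0 : ℕ))
          = if i ∈ L.map Prod.fst then 1 else 0 := by
        by_cases hf : i ∈ L.map Prod.fst
        · rw [if_pos (Or.inr hf), if_pos hf]
        · rw [if_neg (fun hc => hc.elim hil hf), if_neg hf]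
      simp only [List.map_cons, List.count_cons, List.mem_cons, beq_iff_eq]
      rw [hPE, h2, h3]
      omega

lemma Steps.max_not_mem {L : List (Fin k × Fin k)} (h : Steps s t L) :
    Inv s t → ∀ hne : s.Nonempty, s.max' hne ∉ L.map Prod.fst := by
  induction h with
  | base i => intro _ _; simp
  | @step s t L ℓ n hl he hdeg hmin hrec ih =>
    intro hI hne
    have hI' := hI.step hl he hdeg
    have hln : ℓ ≠ n := hI.1.nondiag he
    have hcard2 : 2 ≤ s.card := Finset.one_lt_card.2 ⟨ℓ, hl, n, hI.1.mem_right he, hln⟩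
    have hlmax : ℓ ≠ s.max' hne := leaf_ne_max hI hcard2 hl hdeg hmin hne
    have hne' : (s.erase ℓ).Nonempty :=
      ⟨n, Finset.mem_erase.2 ⟨Ne.symm hln, hI.1.mem_right he⟩⟩
    have hmax' := max'_erase hl hne' hne hlmax
    simp only [List.map_cons, List.mem_cons]
    push_neg
    constructor
    · exact Ne.symm hlmax
    · have := ih hI' hne'
      rwa [hmax'] at this

lemma Steps.mem_fst_iff {L : List (Fin k × Fin k)} (h : Steps s t L) (hI : Inv s t)
    (hne : s.Nonempty) : ∀ i ∈ s, (i ∈ L.map Prod.fst ↔ i ≠ s.max' hne) := by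
  have hsub : (L.map Prod.fst).toFinset ⊆ s.erase (s.max' hne) := by
    intro i hi
    rw [List.mem_toFinset] at hi
    obtain ⟨p, hp, hpe⟩ := List.mem_map.1 hi
    refine Finset.mem_erase.2 ⟨?_, hpe ▸ (h.mem_s hI p hp).1⟩
    intro hcontra
    exact (hcontra ▸ h.max_not_mem hI hne) hi
  have hcardeq : (s.erase (s.max' hne)).card ≤ (L.map Prod.fst).toFinset.card := by
    rw [List.toFinset_card_of_nodup (h.nodup_fst hI), List.length_map,
      Finset.card_erase_of_mem (Finset.max'_mem s hne)]
    have := h.len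
    omega
  have heq := Finset.eq_of_subset_of_card_le hsub hcardeq
  intro i hi
  constructor
  · intro hmem
    obtain ⟨p, hp, hpe⟩ := List.mem_map.1 hmem
    intro hcontra
    exact (hcontra ▸ h.max_not_mem hI hne) hmem
  · intro hne'
    have : i ∈ s.erase (s.max' hne) := Finset.mem_erase.2 ⟨hne', hi⟩
    rw [← heq, List.mem_toFinset] at this
    exact this

lemma Steps.last_snd {L : List (Fin k × Fin k)} (h : Steps s t L) :
    Inv s t → L ≠ [] → ∀ (hne : s.Nonempty) (hLL : L.map Prod.snd ≠ []),
      (L.map Prod.snd).getLast hLL = s.max' hne := by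
  induction h with
  | base i => intro _ hL; exact absurd rfl hL
  | @step s t L ℓ n hl he hdeg hmin hrec ih =>
    intro hI _ hne hLL
    have hI' := hI.step hl he hdeg
    have hln : ℓ ≠ n := hI.1.nondiag he
    have hcard2 : 2 ≤ s.card := Finset.one_lt_card.2 ⟨ℓ, hl, n, hI.1.mem_right he, hln⟩
    have hlmax : ℓ ≠ s.max' hne := leaf_ne_max hI hcard2 hl hdeg hmin hne
    have hne' : (s.erase ℓ).Nonempty :=
      ⟨n, Finset.mem_erase.2 ⟨Ne.symm hln, hI.1.mem_right he⟩⟩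
    have hmax' := max'_erase hl hne' hne hlmax
    rcases eq_or_ne L [] with rfl | hL0
    · -- last step: erase has card 1 and contains n, so erase = {n}
      have hlen := hrec.len
      simp only [List.length_nil] at hlen
      have hcard1 : (s.erase ℓ).card = 1 := by omega
      have hnmem : n ∈ s.erase ℓ := Finset.mem_erase.2 ⟨Ne.symm hln, hI.1.mem_right he⟩
      have : (s.erase ℓ).max' hne' = n := by
        apply le_antisymm
        · apply Finset.max'_le
          intro y hy
          exact le_of_eq (Finset.card_le_one.1 (le_of_eq hcard1) _ hy _ hnmem)
        · exact Finset.le_max' _ _ hnmem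
      simp only [List.map_cons, List.map_nil, List.getLast_singleton]
      rw [← hmax', this]
    · have hLL' : L.map Prod.snd ≠ [] := by
        simp [hL0]
      have := ih hI' hL0 hne' hLL'
      rw [hmax'] at this
      simp only [List.map_cons]
      rw [List.getLast_cons hLL']
      exact this


lemma Steps.det {L : List (Fin k × Fin k)} (h : Steps s t L) :
    ∀ {t' : Finset (Sym2 (Fin k))} {L' : List (Fin k × Fin k)},
      Steps s t' L' → Inv s t → Inv s t' →
      L.map Prod.snd = L'.map Prod.snd → L = L' ∧ t = t' := by
  induction h with
  | base i =>
    intro t' L' h' hI hI' hsnd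
    have hlen := h'.len
    rw [Finset.card_singleton] at hlen
    have hL' : L' = [] := List.length_eq_zero_iff.1 (by omega)
    have ht' : t' = ∅ := Finset.card_eq_zero.1 (by
      have := hI'.2.2
      rw [Finset.card_singleton] at this
      omega)
    exact ⟨hL'.symm, ht'.symm⟩
  | @step s t L ℓ n hl he hdeg hmin hrec ih =>
    intro t' L' h' hI hI' hsnd
    cases h' with
    | base i =>
      exfalso
      have hln : ℓ ≠ n := hI.1.nondiag he
      have h1 : ℓ = i := Finset.mem_singleton.1 hl
      have h2 : n = i := Finset.mem_singleton.1 (hI.1.mem_right he)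
      exact hln (h1.trans h2.symm)
    | @step _ _ L₂ ℓ₂ n₂ hl₂ he₂ hdeg₂ hmin₂ hrec₂ =>
      have hne : s.Nonempty := ⟨ℓ, hl⟩
      -- degrees agree
      have hdegeq : ∀ i ∈ s, pdeg t i = pdeg t' i := by
        intro i hi
        have e1 := (Steps.step ℓ n hl he hdeg hmin hrec).pdeg_eq hI i hi
        have e2 := (Steps.step ℓ₂ n₂ hl₂ he₂ hdeg₂ hmin₂ hrec₂).pdeg_eq hI' i hi
        have m1 := (Steps.step ℓ n hl he hdeg hmin hrec).mem_fst_iff hI hne i hi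
        have m2 := (Steps.step ℓ₂ n₂ hl₂ he₂ hdeg₂ hmin₂ hrec₂).mem_fst_iff hI' hne i hi
        rw [e1, e2, hsnd]
        congr 1
        by_cases hmax : i = s.max' hne
        · rw [if_neg (fun hc => (m1.1 hc) hmax), if_neg (fun hc => (m2.1 hc) hmax)]
        · rw [if_pos (m1.2 hmax), if_pos (m2.2 hmax)]
      have hll : ℓ = ℓ₂ := by
        have d1 : pdeg t' ℓ = 1 := by rw [← hdegeq ℓ hl]; exact hdeg
        have d2 : pdeg t ℓ₂ = 1 := by rw [hdegeq ℓ₂ hl₂]; exact hdeg₂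
        exact le_antisymm (hmin ℓ₂ hl₂ d2) (hmin₂ ℓ hl d1)
      subst hll
      have hnn : n = n₂ := by
        simpa using congrArg List.head? hsnd
      subst hnn
      have htail : L.map Prod.snd = L₂.map Prod.snd := by
        simpa using congrArg List.tail hsnd
      obtain ⟨hLeq, hteq⟩ :=
        ih hrec₂ (hI.step hl he hdeg) (hI'.step hl₂ he₂ hdeg₂) htail
      constructor
      · rw [hLeq]
      · have : t = insert s(ℓ, n) (t.erase s(ℓ, n)) := (Finset.insert_erase he).symm
        rw [this, hteq, Finset.insert_erase he₂]

lemma exists_steps : ∀ (m : ℕ) (s : Finset (Fin k)) (t : Finset (Sym2 (Fin k))),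
    s.card = m + 1 → Inv s t → ∃ L, Steps s t L := by
  intro m
  induction m with
  | zero =>
    intro s t hcard hI
    obtain ⟨i, rfl⟩ := Finset.card_eq_one.1 hcard
    have ht : t = ∅ := Finset.card_eq_zero.1 (by
      have := hI.2.2
      rw [Finset.card_singleton] at this
      omega)
    exact ⟨[], ht ▸ Steps.base i⟩
  | succ m ih =>
    intro s t hcard hI
    have hcard2 : 2 ≤ s.card := by omega
    obtain ⟨ℓ₀, hℓ₀, hd₀⟩ := exists_leaf hI hcard2
    have hlvne : (s.filter (fun i => pdeg t i = 1)).Nonempty :=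
      ⟨ℓ₀, mem_filter.2 ⟨hℓ₀, hd₀⟩⟩
    set ℓ := (s.filter (fun i => pdeg t i = 1)).min' hlvne with hldef
    have hℓ : ℓ ∈ s.filter (fun i => pdeg t i = 1) := Finset.min'_mem _ _
    have hls : ℓ ∈ s := (mem_filter.1 hℓ).1
    have hld : pdeg t ℓ = 1 := (mem_filter.1 hℓ).2
    have hmin : ∀ i ∈ s, pdeg t i = 1 → ℓ ≤ i := fun i hi hdi =>
      Finset.min'_le _ _ (mem_filter.2 ⟨hi, hdi⟩)
    have hfil : (t.filter fun e => ℓ ∈ e).Nonempty := by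
      rw [← Finset.card_pos]
      have : pdeg t ℓ = (t.filter fun e => ℓ ∈ e).card := rfl
      omega
    obtain ⟨e, hef⟩ := hfil
    obtain ⟨het, hle⟩ := mem_filter.1 hef
    obtain ⟨n, rfl⟩ := Sym2.mem_iff_exists.1 hle
    have hI' := hI.step hls het hld
    have hcard' : (s.erase ℓ).card = m + 1 := by
      rw [Finset.card_erase_of_mem hls]; omega
    obtain ⟨L, hL⟩ := ih _ _ hcard' hI'
    exact ⟨_, Steps.step ℓ n hls het hld hmin hL⟩

lemma Steps.recon {β γ : Type*} {L : List (Fin k × Fin k)} (h : Steps s t L) :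
    ∀ (F F' : Fin k → β) (nbrf : β → γ → β) (idxf : β → β → γ)
      (Adjf : β → β → Prop),
      (∀ v u, Adjf v u → nbrf v (idxf v u) = u) →
      Inv s t →
      (∀ a b, s(a,b) ∈ t → Adjf (F a) (F b)) →
      (∀ a b, s(a,b) ∈ t → Adjf (F' a) (F' b)) →
      ∀ (hne : s.Nonempty), F (s.max' hne) = F' (s.max' hne) →
      L.map (fun p => idxf (F p.2) (F p.1)) = L.map (fun p => idxf (F' p.2) (F' p.1)) →
      ∀ i ∈ s, F i = F' i := by
  induction h with
  | base j =>
    intro F F' nbrf idxf Adjf hnbr hI hembF hembF' hne hmax hcode i hi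
    have : i = j := Finset.mem_singleton.1 hi
    subst this
    have : ({i} : Finset (Fin k)).max' hne = i := Finset.max'_singleton i
    rwa [this] at hmax
  | @step s t L ℓ n hl he hdeg hmin hrec ih =>
    intro F F' nbrf idxf Adjf hnbr hI hembF hembF' hne hmax hcode i hi
    have hI' := hI.step hl he hdeg
    have hln : ℓ ≠ n := hI.1.nondiag he
    have hns : n ∈ s := hI.1.mem_right he
    have hcard2 : 2 ≤ s.card := Finset.one_lt_card.2 ⟨ℓ, hl, n, hns, hln⟩
    have hlmax : ℓ ≠ s.max' hne := leaf_ne_max hI hcard2 hl hdeg hmin hne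
    have hne' : (s.erase ℓ).Nonempty := ⟨n, Finset.mem_erase.2 ⟨Ne.symm hln, hns⟩⟩
    have hmax' := max'_erase hl hne' hne hlmax
    have hembF2 : ∀ a b, s(a,b) ∈ t.erase s(ℓ,n) → Adjf (F a) (F b) :=
      fun a b hab => hembF a b (Finset.mem_of_mem_erase hab)
    have hembF2' : ∀ a b, s(a,b) ∈ t.erase s(ℓ,n) → Adjf (F' a) (F' b) :=
      fun a b hab => hembF' a b (Finset.mem_of_mem_erase hab)
    have hmax2 : F ((s.erase ℓ).max' hne') = F' ((s.erase ℓ).max' hne') := by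
      rw [hmax']; exact hmax
    have hcode2 : L.map (fun p => idxf (F p.2) (F p.1))
        = L.map (fun p => idxf (F' p.2) (F' p.1)) := by
      simpa using congrArg List.tail hcode
    have heq := ih F F' nbrf idxf Adjf hnbr hI' hembF2 hembF2' hne' hmax2 hcode2
    rcases eq_or_ne i ℓ with rfl | hil
    · have hfn : F n = F' n := heq n (Finset.mem_erase.2 ⟨Ne.symm hln, hns⟩)
      have hhead : idxf (F n) (F i) = idxf (F' n) (F' i) := by
        simpa using congrArg List.head? hcode
      have hadj : Adjf (F n) (F i) := hembF n i (by rw [Sym2.eq_swap]; exact he)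
      have hadj' : Adjf (F' n) (F' i) := hembF' n i (by rw [Sym2.eq_swap]; exact he)
      calc F i = nbrf (F n) (idxf (F n) (F i)) := (hnbr _ _ hadj).symm
        _ = nbrf (F' n) (idxf (F' n) (F' i)) := by rw [hhead, hfn]
        _ = F' i := hnbr _ _ hadj'
    · exact heq i (Finset.mem_erase.2 ⟨hil, hi⟩)

end PruferAux


section Bridge
open PruferAux

variable {V : Type*} [Fintype V] [DecidableEq V] {G : SimpleGraph V} {k : ℕ}

open Classical in
noncomputable def pullT (H : G.Subgraph) (f : Fin k → V) : Finset (Sym2 (Fin k)) :=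
  Finset.univ.filter fun e => ∃ a b, e = s(a, b) ∧ H.Adj (f a) (f b)

lemma mem_pullT {H : G.Subgraph} {f : Fin k → V} {a b : Fin k} :
    s(a, b) ∈ pullT H f ↔ H.Adj (f a) (f b) := by
  classical
  rw [pullT, Finset.mem_filter]
  constructor
  · rintro ⟨-, i, j, hij, hadj⟩
    rcases Sym2.eq_iff.1 hij with ⟨rfl, rfl⟩ | ⟨rfl, rfl⟩
    · exact hadj
    · exact hadj.symm
  · intro h
    exact ⟨Finset.mem_univ _, a, b, rfl, h⟩

lemma pull_inv (H : G.Subgraph) (f : Fin k → V)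
    (hverts : H.verts = Set.range f) (hinj : Function.Injective f)
    (htree : H.coe.IsTree) (hk : H.verts.ncard = k) :
    Inv (Finset.univ : Finset (Fin k)) (pullT H f) := by
  classical
  -- the bijection Fin k ≃ verts
  have hmemf : ∀ i, f i ∈ H.verts := fun i => hverts ▸ ⟨i, rfl⟩
  set f' : Fin k → ↥H.verts := fun i => ⟨f i, hmemf i⟩ with hf'
  have hbij : Function.Bijective f' := by
    constructor
    · intro a b hab
      exact hinj (congrArg Subtype.val hab)
    · rintro ⟨x, hx⟩
      rw [hverts] at hx
      obtain ⟨i, rfl⟩ := hx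
      exact ⟨i, rfl⟩
  set e2 := Equiv.ofBijective f' hbij with he2
  have hgf : ∀ x, f (e2.symm x) = ↑x := by
    intro x
    have := e2.apply_symm_apply x
    exact congrArg Subtype.val this
  have hcardV : Fintype.card ↥H.verts = k := by
    rw [← Set.toFinset_card, ← Set.ncard_eq_toFinset_card']
    exact hk
  refine ⟨?_, ?_, ?_⟩
  · -- Wf
    intro e he
    induction e using Sym2.inductionOn with
    | hf a b =>
      have hadj : H.Adj (f a) (f b) := mem_pullT.1 he
      refine ⟨?_, fun i _ => Finset.mem_univ i⟩
      rw [Sym2.mk_isDiag_iff]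
      intro hab
      subst hab
      exact G.loopless.irrefl _ (H.adj_sub hadj)
  · -- Conn
    have hwalk : ∀ (x y : ↥H.verts) (_ : H.coe.Walk x y),
        Reach (pullT H f) (e2.symm x) (e2.symm y) := by
      intro x y w
      induction w with
      | nil => exact Relation.ReflTransGen.refl
      | @cons x c y h w ih =>
        refine Relation.ReflTransGen.head ?_ ih
        rw [mem_pullT, hgf, hgf]
        exact h
    intro i _ j _
    obtain ⟨w⟩ := htree.isConnected (f' i) (f' j)
    have := hwalk _ _ w
    have h1 : e2.symm (f' i) = i := e2.symm_apply_apply i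
    have h2 : e2.symm (f' j) = j := e2.symm_apply_apply j
    rwa [h1, h2] at this
  · -- card
    have hcount : H.coe.edgeFinset.card + 1 = Fintype.card ↥H.verts :=
      htree.card_edgeFinset
    rw [Finset.card_univ, Fintype.card_fin]
    have hcardeq : (pullT H f).card = H.coe.edgeFinset.card := by
      apply Finset.card_bij' (fun e _ => Sym2.map f' e) (fun e _ => Sym2.map e2.symm e)
      · intro e he
        induction e using Sym2.inductionOn with
        | hf a b =>
          rw [Sym2.map_pair_eq, SimpleGraph.mem_edgeFinset, SimpleGraph.mem_edgeSet,
            SimpleGraph.Subgraph.coe_adj]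
          exact mem_pullT.1 he
      · intro e he
        induction e using Sym2.inductionOn with
        | hf x y =>
          rw [SimpleGraph.mem_edgeFinset, SimpleGraph.mem_edgeSet,
            SimpleGraph.Subgraph.coe_adj] at he
          rw [Sym2.map_pair_eq, mem_pullT, hgf, hgf]
          exact he
      · intro e he
        induction e using Sym2.inductionOn with
        | hf a b =>
          rw [Sym2.map_pair_eq, Sym2.map_pair_eq]
          have h1 : e2.symm (f' a) = a := e2.symm_apply_apply a
          have h2 : e2.symm (f' b) = b := e2.symm_apply_apply b
          rw [h1, h2]
      · intro e he
        induction e using Sym2.inductionOn with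
        | hf x y =>
          rw [Sym2.map_pair_eq, Sym2.map_pair_eq]
          have h1 : f' (e2.symm x) = x := e2.apply_symm_apply x
          have h2 : f' (e2.symm y) = y := e2.apply_symm_apply y
          rw [h1, h2]
    omega

lemma adj_iff_pullT (H : G.Subgraph) (f : Fin k → V) (hverts : H.verts = Set.range f)
    {u v : V} :
    H.Adj u v ↔ ∃ a b, f a = u ∧ f b = v ∧ s(a, b) ∈ pullT H f := by
  constructor
  · intro h
    have hu : u ∈ H.verts := H.edge_vert h
    have hv : v ∈ H.verts := H.edge_vert h.symm
    rw [hverts] at hu hv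
    obtain ⟨a, rfl⟩ := hu
    obtain ⟨b, rfl⟩ := hv
    exact ⟨a, b, rfl, rfl, mem_pullT.2 h⟩
  · rintro ⟨a, b, rfl, rfl, hab⟩
    exact mem_pullT.1 hab

lemma getElem_idx_congr {a : Type*} (l : List a) {m n : ℕ} (h : m = n) (hm : m < l.length) :
    l[m]'hm = l[n]'(h ▸ hm) := by subst h; rfl

lemma subgraph_finite (G : SimpleGraph V) : Finite G.Subgraph :=
  Finite.of_injective (fun H => (H.verts, H.Adj))
    (fun H H' h => SimpleGraph.Subgraph.ext (congrArg Prod.fst h) (congrArg Prod.snd h))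

lemma main_count (G : SimpleGraph V) [DecidableRel G.Adj] (d k : ℕ)
    (hreg : G.IsRegularOfDegree d) (hk : 2 ≤ k) (hd : 1 ≤ d) :
    ({H : G.Subgraph | H.verts.ncard = k ∧ H.coe.IsTree} : Set G.Subgraph).ncard
        * k.factorial
      ≤ Fintype.card V * k ^ (k - 2) * d ^ (k - 1) := by
  classical
  have hfinsub : Finite G.Subgraph := subgraph_finite G
  have hk0 : 0 < k := by omega
  have hfk : NeZero k := ⟨by omega⟩
  set S : Set G.Subgraph := {H : G.Subgraph | H.verts.ncard = k ∧ H.coe.IsTree} with hSdef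
  -- neighbor enumeration
  have hdeg : ∀ v, Fintype.card ↥(G.neighborFinset v) = d := fun v => by
    rw [Fintype.card_coe]; exact hreg v
  set eqv : (v : V) → ↥(G.neighborFinset v) ≃ Fin d := fun v => Fintype.equivFinOfCardEq (hdeg v)
    with heqv
  set nbrf : V → Fin d → V := fun v j => ↑((eqv v).symm j) with hnbrf
  set idxf : V → V → Fin d := fun v u =>
    if h : u ∈ G.neighborFinset v then eqv v ⟨u, h⟩ else ⟨0, hd⟩ with hidxf
  have hnbr : ∀ v u, G.Adj v u → nbrf v (idxf v u) = u := by
    intro v u h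
    have hm : u ∈ G.neighborFinset v := by rwa [SimpleGraph.mem_neighborFinset]
    simp only [hnbrf, hidxf, dif_pos hm, Equiv.symm_apply_apply]
  set P : Set (G.Subgraph × (Fin k → V)) :=
    {p | p.1 ∈ S ∧ p.1.verts = Set.range p.2 ∧ Function.Injective p.2} with hPdef
  haveI := subgraph_finite G
  have h1 : S.ncard * k.factorial ≤ Nat.card ↥P := by
    have hScard : ∀ H : ↥S, Fintype.card ↥(H.1.verts) = k := fun H => by
      rw [← Set.toFinset_card, ← Set.ncard_eq_toFinset_card']
      exact H.2.1
    set uH : (H : ↥S) → Fin k ≃ ↥(H.1.verts) :=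
      fun H => (Fintype.equivFinOfCardEq (hScard H)).symm with huH
    have hmem : ∀ (q : ↥S × Equiv.Perm (Fin k)),
        ((q.1.1, fun i => ↑(uH q.1 (q.2 i))) : G.Subgraph × (Fin k → V)) ∈ P := by
      rintro ⟨H, σ⟩
      refine ⟨H.2, ?_, ?_⟩
      · ext x
        simp only [Set.mem_range]
        constructor
        · intro hx
          refine ⟨σ.symm ((uH H).symm ⟨x, hx⟩), ?_⟩
          simp only [Equiv.apply_symm_apply]
        · rintro ⟨i, rfl⟩
          exact (uH H (σ i)).2
      · intro a b hab
        have h1 : uH H (σ a) = uH H (σ b) := Subtype.ext hab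
        exact σ.injective ((uH H).injective h1)
    set χ : ↥S × Equiv.Perm (Fin k) → ↥P := fun q => ⟨_, hmem q⟩ with hχ
    have hinj : Function.Injective χ := by
      rintro ⟨H, σ⟩ ⟨H', σ'⟩ h
      have hfst : H.1 = H'.1 := congrArg (fun r => r.1.1) h
      have hHH : H = H' := Subtype.ext hfst
      subst hHH
      have hsnd : (fun i => (↑(uH H (σ i)) : V)) = fun i => ↑(uH H (σ' i)) :=
        congrArg (fun r => r.1.2) h
      have hσ : σ = σ' := by
        apply Equiv.ext
        intro i
        exact (uH H).injective (Subtype.ext (congrFun hsnd i))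
      rw [hσ]
    calc S.ncard * k.factorial = Nat.card (↥S × Equiv.Perm (Fin k)) := by
          rw [Nat.card_prod, Nat.card_coe_set_eq, Nat.card_eq_fintype_card,
            Fintype.card_perm, Fintype.card_fin]
      _ ≤ Nat.card ↥P := Nat.card_le_card_of_injective χ hinj
  have h2 : Nat.card ↥P ≤ Fintype.card V * k ^ (k - 2) * d ^ (k - 1) := by
    have hune : (Finset.univ : Finset (Fin k)).Nonempty := ⟨⟨0, hk0⟩, Finset.mem_univ _⟩
    have hInv : ∀ p : ↥P, Inv Finset.univ (pullT p.1.1 p.1.2) := fun p =>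
      pull_inv p.1.1 p.1.2 p.2.2.1 p.2.2.2 p.2.1.2 p.2.1.1
    have hLex : ∀ p : ↥P, ∃ L, Steps Finset.univ (pullT p.1.1 p.1.2) L := fun p =>
      exists_steps (k - 1) _ _ (by rw [Finset.card_univ, Fintype.card_fin]; omega) (hInv p)
    choose Lf hLf using hLex
    have hlen : ∀ p, (Lf p).length = k - 1 := fun p => by
      have := (hLf p).len
      rw [Finset.card_univ, Fintype.card_fin] at this
      omega
    set code : ↥P → V × (Fin (k - 2) → Fin k) × (Fin (k - 1) → Fin d) := fun p =>
      (p.1.2 (Finset.univ.max' hune),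
       fun j => ((Lf p).map Prod.snd).getD j.1 ⟨0, hk0⟩,
       fun j => ((Lf p).map (fun q => idxf (p.1.2 q.2) (p.1.2 q.1))).getD j.1 ⟨0, hd⟩)
      with hcodedef
    have hcinj : Function.Injective code := by
      intro p p' h
      have hv : p.1.2 (Finset.univ.max' hune) = p'.1.2 (Finset.univ.max' hune) :=
        congrArg Prod.fst h
      have hns0 := congrArg (fun r => r.2.1) h
      have hrs0 := congrArg (fun r => r.2.2) h
      have hlns : ((Lf p).map Prod.snd).length = k - 1 := by
        rw [List.length_map]; exact hlen p
      have hlns' : ((Lf p').map Prod.snd).length = k - 1 := by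
        rw [List.length_map]; exact hlen p'
      have hLne : ((Lf p).map Prod.snd) ≠ [] := by
        intro h0
        rw [h0] at hlns
        simp at hlns
        omega
      have hLne' : ((Lf p').map Prod.snd) ≠ [] := by
        intro h0
        rw [h0] at hlns'
        simp at hlns'
        omega
      have hLne0 : Lf p ≠ [] := fun h0 => hLne (by rw [h0]; rfl)
      have hLne0' : Lf p' ≠ [] := fun h0 => hLne' (by rw [h0]; rfl)
      have hnseq : (Lf p).map Prod.snd = (Lf p').map Prod.snd := by
        apply List.ext_getElem (by rw [hlns, hlns'])
        intro m hm1 hm2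
        by_cases hmk : m < k - 2
        · have e1 := List.getD_eq_getElem ((Lf p).map Prod.snd) ⟨0, hk0⟩ hm1
          have e2 := List.getD_eq_getElem ((Lf p').map Prod.snd) ⟨0, hk0⟩ hm2
          rw [← e1, ← e2]
          exact congrFun hns0 ⟨m, hmk⟩
        · have hm : m = k - 2 := by
            rw [hlns] at hm1
            omega
          have g1 := List.getLast_eq_getElem (l := (Lf p).map Prod.snd) hLne
          have g2 := List.getLast_eq_getElem (l := (Lf p').map Prod.snd) hLne'
          have i1 : ((Lf p).map Prod.snd).length - 1 = m := by omega
          have i2 : ((Lf p').map Prod.snd).length - 1 = m := by omega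
          subst hm
          have l1 := (hLf p).last_snd (hInv p) hLne0 hune hLne
          have l2 := (hLf p').last_snd (hInv p') hLne0' hune hLne'
          rw [List.getLast_eq_getElem] at l1 l2
          have i1 : ((Lf p).map Prod.snd).length - 1 = k - 2 := by omega
          have i2 : ((Lf p').map Prod.snd).length - 1 = k - 2 := by omega
          rw [getElem_idx_congr _ i1] at l1
          rw [getElem_idx_congr _ i2] at l2
          rw [l1, l2]
      obtain ⟨hLeq, hteq⟩ := (hLf p).det (hLf p') (hInv p) (hInv p') hnseq
      have hrseq : (Lf p).map (fun q => idxf (p.1.2 q.2) (p.1.2 q.1))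
          = (Lf p).map (fun q => idxf (p'.1.2 q.2) (p'.1.2 q.1)) := by
        have h0 : (Lf p).map (fun q => idxf (p.1.2 q.2) (p.1.2 q.1))
            = (Lf p').map (fun q => idxf (p'.1.2 q.2) (p'.1.2 q.1)) := by
          apply List.ext_getElem
          · rw [List.length_map, List.length_map, hlen p, hlen p']
          · intro m hm1 hm2
            have hmk : m < k - 1 := by
              rw [List.length_map, hlen p] at hm1
              exact hm1
            have e1 := List.getD_eq_getElem _ (⟨0, hd⟩ : Fin d) hm1
            have e2 := List.getD_eq_getElem _ (⟨0, hd⟩ : Fin d) hm2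
            rw [← e1, ← e2]
            exact congrFun hrs0 (⟨m, hmk⟩ : Fin (k - 1))
        rw [h0, ← hLeq]
      have hembf : ∀ a b, s(a, b) ∈ pullT p.1.1 p.1.2 → G.Adj (p.1.2 a) (p.1.2 b) :=
        fun a b hab => p.1.1.adj_sub (mem_pullT.1 hab)
      have hembf' : ∀ a b, s(a, b) ∈ pullT p.1.1 p.1.2 → G.Adj (p'.1.2 a) (p'.1.2 b) := by
        intro a b hab
        rw [hteq] at hab
        exact p'.1.1.adj_sub (mem_pullT.1 hab)
      have hfeq' := (hLf p).recon p.1.2 p'.1.2 nbrf idxf G.Adj hnbr (hInv p)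
        hembf hembf' hune hv hrseq
      have hfeq : p.1.2 = p'.1.2 := funext fun i => hfeq' i (Finset.mem_univ i)
      have hHeq : p.1.1 = p'.1.1 := by
        apply SimpleGraph.Subgraph.ext
        · rw [p.2.2.1, p'.2.2.1, hfeq]
        · funext u v
          apply propext
          refine (adj_iff_pullT p.1.1 p.1.2 p.2.2.1).trans
            (Iff.trans ?_ (adj_iff_pullT p'.1.1 p'.1.2 p'.2.2.1).symm)
          rw [hteq, hfeq]
      apply Subtype.ext
      have : p.1 = (p.1.1, p.1.2) := rfl
      rw [this, hHeq, hfeq]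
    calc Nat.card ↥P
        ≤ Nat.card (V × (Fin (k - 2) → Fin k) × (Fin (k - 1) → Fin d)) :=
          Nat.card_le_card_of_injective code hcinj
      _ = Fintype.card V * k ^ (k - 2) * d ^ (k - 1) := by
          rw [Nat.card_eq_fintype_card, Fintype.card_prod, Fintype.card_prod,
            Fintype.card_fun, Fintype.card_fun, Fintype.card_fin, Fintype.card_fin,
            Fintype.card_fin, Fintype.card_fin]
          ring
  exact h1.trans h2

end Bridge


theorem stmt1 {V : Type*} [Fintype V] [DecidableEq V] (G : SimpleGraph V) [DecidableRel G.Adj]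
    (n d k : ℕ) (hn : Fintype.card V = n) (hreg : G.IsRegularOfDegree d) :
    (({H : G.Subgraph | H.verts.ncard = k ∧ H.coe.IsTree} : Set G.Subgraph).ncard : ℝ)
      ≤ (n : ℝ) * (k : ℝ) ^ (k - 2) * (d : ℝ) ^ (k - 1) / (Nat.factorial k) := by
  classical
  subst hn
  haveI := subgraph_finite G
  rcases Nat.lt_or_ge k 2 with hk2 | hk2
  · interval_cases k
    · -- k = 0
      have hempty : {H : G.Subgraph | H.verts.ncard = 0 ∧ H.coe.IsTree}
          = (∅ : Set G.Subgraph) := by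
        ext H
        simp only [Set.mem_setOf_eq, Set.mem_empty_iff_false, iff_false, not_and]
        intro h0 htree
        have hne : H.verts.Nonempty := Set.nonempty_coe_sort.1 htree.isConnected.nonempty
        have := (Set.ncard_pos (Set.toFinite _)).2 hne
        omega
      rw [hempty, Set.ncard_empty, Nat.cast_zero]
      positivity
    · -- k = 1
      have hle : ({H : G.Subgraph | H.verts.ncard = 1 ∧ H.coe.IsTree} : Set G.Subgraph).ncard
          ≤ Fintype.card V := by
        set S1 : Set G.Subgraph := {H : G.Subgraph | H.verts.ncard = 1 ∧ H.coe.IsTree}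
          with hS1
        have hx : ∀ H : ↥S1, ∃ v, H.1.verts = {v} := fun H => Set.ncard_eq_one.1 H.2.1
        choose vf hvf using hx
        have hnoadj : ∀ (H : ↥S1) (x y : V), ¬ H.1.Adj x y := by
          intro H x y hadj
          have hx' : x ∈ H.1.verts := H.1.edge_vert hadj
          have hy' : y ∈ H.1.verts := H.1.edge_vert hadj.symm
          rw [hvf H, Set.mem_singleton_iff] at hx' hy'
          subst hx'
          subst hy'
          exact G.loopless.irrefl _ (H.1.adj_sub hadj)
        have hinj : Function.Injective vf := by
          intro H H' h
          apply Subtype.ext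
          apply SimpleGraph.Subgraph.ext
          · rw [hvf H, hvf H', h]
          · funext x y
            apply propext
            exact ⟨fun hadj => absurd hadj (hnoadj H x y),
              fun hadj => absurd hadj (hnoadj H' x y)⟩
        calc S1.ncard = Nat.card ↥S1 := (Nat.card_coe_set_eq _).symm
          _ ≤ Nat.card V := Nat.card_le_card_of_injective vf hinj
          _ = Fintype.card V := Nat.card_eq_fintype_card
      have : ((1:ℕ):ℝ) ^ (1 - 2) = 1 := by norm_num
      rw [this]
      rw [show (1:ℕ) - 1 = 0 from rfl, pow_zero, show Nat.factorial 1 = 1 from rfl]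
      rw [Nat.cast_one, mul_one, mul_one, div_one]
      exact_mod_cast hle
  · rcases Nat.eq_zero_or_pos d with rfl | hd1
    · -- d = 0 : no subtrees with ≥ 2 vertices
      have hempty : {H : G.Subgraph | H.verts.ncard = k ∧ H.coe.IsTree}
          = (∅ : Set G.Subgraph) := by
        ext H
        simp only [Set.mem_setOf_eq, Set.mem_empty_iff_false, iff_false, not_and]
        intro hcard htree
        have h2 : 1 < H.verts.ncard := by omega
        obtain ⟨a, ha, b, hb, hab⟩ := (Set.one_lt_ncard (Set.toFinite _)).1 h2
        obtain ⟨w⟩ := htree.isConnected ⟨a, ha⟩ ⟨b, hb⟩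
        have hne : (⟨a, ha⟩ : ↥H.verts) ≠ ⟨b, hb⟩ := fun h => hab (congrArg Subtype.val h)
        cases w with
        | nil => exact hne rfl
        | cons hadj w' =>
          have hGadj : G.Adj a _ := H.adj_sub hadj
          have hmem := (SimpleGraph.mem_neighborFinset G a _).2 hGadj
          have hcard0 : (G.neighborFinset a).card = 0 := hreg a
          rw [Finset.card_eq_zero.1 hcard0] at hmem
          exact absurd hmem (Finset.notMem_empty _)
      rw [hempty, Set.ncard_empty, Nat.cast_zero]
      positivity
    · have hmc := main_count G d k hreg hk2 hd1
      rw [le_div_iff₀ (by positivity : (0:ℝ) < (Nat.factorial k : ℝ))]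
      calc (({H : G.Subgraph | H.verts.ncard = k ∧ H.coe.IsTree} : Set G.Subgraph).ncard : ℝ)
            * (Nat.factorial k : ℝ)
          = ((({H : G.Subgraph | H.verts.ncard = k ∧ H.coe.IsTree} :
              Set G.Subgraph).ncard * Nat.factorial k : ℕ) : ℝ) := by push_cast; ring
        _ ≤ ((Fintype.card V * k ^ (k - 2) * d ^ (k - 1) : ℕ) : ℝ) := by exact_mod_cast hmc
        _ = (Fintype.card V : ℝ) * (k : ℝ) ^ (k - 2) * (d : ℝ) ^ (k - 1) := by push_cast; ring
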